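/- Let k₁ ≥ 0, k₂ > 0, η ∈ (0,1], M > 0, and let f ∈ C[0,1] satisfy |f(t) − f(x)| ≤ M |t−x|^η / (k₁x² + k₂x + t)^{η/2} for all x ∈ (0,1] and t ∈ [0,1] (i.e., f ∈ Lip_M^{(k₁,k₂)}(η)). Then for all λ ∈ [−1,1], n ≥ 2 and x ∈ (0,1], |B_{n,λ}(f;x) − f(x)| ≤ M α_n(x)^{η/2} (k₁x² + k₂x)^{−η/2}, where α_n(x) = B_{n,λ}((t−x)²;x). -/

import Mathlib

open Finset Filter

/-- Bernstein basis polynomial `b_{n,i}(x) = C(n,i) x^i (1-x)^(n-i)`. -/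
noncomputable def bern (n i : ℕ) (x : ℝ) : ℝ :=
  (n.choose i : ℝ) * x ^ i * (1 - x) ^ (n - i)

/-- Bézier basis `b̃_{n,i}(λ; x)` with shape parameter `lam`. -/
noncomputable def bez (n : ℕ) (lam x : ℝ) (i : ℕ) : ℝ :=
  if i = 0 then bern n 0 x - lam / ((n : ℝ) + 1) * bern (n + 1) 1 x
  else if i = n then bern n n x - lam / ((n : ℝ) + 1) * bern (n + 1) n x
  else bern n i x + lam * (((n : ℝ) - 2 * (i : ℝ) + 1) / ((n : ℝ) ^ 2 - 1) * bern (n + 1) i x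
    - ((n : ℝ) - 2 * (i : ℝ) - 1) / ((n : ℝ) ^ 2 - 1) * bern (n + 1) (i + 1) x)

/-- The λ-Bernstein operator `B_{n,λ}(f; x) = ∑_{i=0}^n f(i/n) b̃_{n,i}(λ; x)`. -/
noncomputable def lB (n : ℕ) (lam : ℝ) (f : ℝ → ℝ) (x : ℝ) : ℝ :=
  ∑ i ∈ Finset.range (n + 1), f ((i : ℝ) / (n : ℝ)) * bez n lam x i

set_option maxHeartbeats 1000000

lemma choose_id1 (n i : ℕ) (hi : i ≤ n) : (n+1) * n.choose i = (n+1).choose i * (n+1-i) := by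
  have h := Nat.add_one_mul_choose_eq n (n - i)
  rw [Nat.choose_symm hi, show n - i + 1 = n + 1 - i by omega,
    Nat.choose_symm (by omega : i ≤ n + 1)] at h
  omega

lemma bern_sum (n : ℕ) (x : ℝ) : ∑ i ∈ Finset.range (n+1), bern n i x = 1 :=
  calc ∑ i ∈ Finset.range (n+1), bern n i x
      = ∑ k ∈ Finset.range (n+1), x^k*(1-x)^(n-k)*(n.choose k : ℝ) := by
        refine Finset.sum_congr rfl fun i _ => ?_; unfold bern; ring
    _ = (x + (1-x))^n := (add_pow x (1-x) n).symm
    _ = 1 := by rw [show x+(1-x)=(1:ℝ) by ring, one_pow]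

lemma bez_nonneg {n : ℕ} (hn : 2 ≤ n) {lam x : ℝ} (hlam : -1 ≤ lam) (hlam' : lam ≤ 1)
    (hx0 : 0 ≤ x) (hx1 : x ≤ 1) {i : ℕ} (hi : i ≤ n) : 0 ≤ bez n lam x i := by
  have hN1 : ((n:ℝ) + 1) ≠ 0 := by positivity
  by_cases h0 : i = 0
  · subst h0
    have hE : bez n lam x 0 = (1-x)^n * (1 - lam * x) := by
      unfold bez bern
      simp only [↓reduceIte, if_pos rfl, Nat.choose_zero_right, Nat.choose_one_right, Nat.sub_zero,
        Nat.add_sub_cancel, pow_zero, Nat.cast_one, pow_one, Nat.cast_add]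
      field_simp
    rw [hE]
    have h1 : (0:ℝ) ≤ 1 - x := by linarith
    have h2 : (0:ℝ) ≤ 1 - lam * x := by nlinarith
    positivity
  by_cases hn' : i = n
  · subst hn'
    have hE : bez i lam x i = x^i * (1 - lam * (1 - x)) := by
      unfold bez bern
      simp only [↓reduceIte, if_neg h0, if_pos rfl, Nat.choose_self, Nat.sub_self, pow_zero,
        Nat.choose_succ_self_right, Nat.cast_add, Nat.cast_one,
        show i + 1 - i = 1 by omega, pow_one]
      field_simp
    rw [hE]
    have h2 : (0:ℝ) ≤ 1 - lam * (1 - x) := by nlinarith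
    positivity
  · set N : ℝ := (n : ℝ) with hNdef
    set I : ℝ := (i : ℝ) with hIdef
    have hI1 : 1 ≤ I := by simp [hIdef]; omega
    have hIN : I ≤ N - 1 := by
      have : (i:ℝ) + 1 ≤ (n:ℝ) := by exact_mod_cast Nat.succ_le_of_lt (by omega)
      simp [hIdef, hNdef]; linarith
    have hN2 : 2 ≤ N := by rw [hNdef]; exact_mod_cast hn
    have hden : (0:ℝ) < N^2 - 1 := by nlinarith
    set c : ℝ := (n.choose i : ℝ) with hcdef
    set d : ℝ := ((n+1).choose i : ℝ) with hddef
    set e : ℝ := ((n+1).choose (i+1) : ℝ) with hedef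
    have hc : 0 < c := by
      simp only [hcdef]; exact_mod_cast Nat.choose_pos hi
    have hd : 0 ≤ d := by positivity
    have he : 0 ≤ e := by positivity
    -- cast identities
    have hc1 : d * (N + 1 - I) = (N + 1) * c := by
      have h := choose_id1 n i hi
      have : ((n+1) * n.choose i : ℝ) = ((n+1).choose i : ℝ) * ((n+1-i : ℕ) : ℝ) := by
        exact_mod_cast congrArg (Nat.cast : ℕ → ℝ) h
      rw [Nat.cast_sub (by omega : i ≤ n+1)] at this
      push_cast at this ⊢
      linarith [this]
    have hc2 : e * (I + 1) = (N + 1) * c := by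
      have h := Nat.add_one_mul_choose_eq n i
      have : ((n+1) * n.choose i : ℝ) = ((n+1).choose (i+1) : ℝ) * ((i:ℝ)+1) := by
        exact_mod_cast congrArg (Nat.cast : ℕ → ℝ) h
      push_cast at this ⊢
      linarith [this]
    -- factorized form
    set P : ℝ := (N - 2*I + 1) / (N^2 - 1) * d with hPdef
    set Q : ℝ := (N - 2*I - 1) / (N^2 - 1) * e with hQdef
    have hE : bez n lam x i = x^i * (1-x)^(n-i) * (c + lam * (P * (1-x) - Q * x)) := by
      unfold bez bern
      rw [if_neg h0, if_neg hn']
      rw [show n + 1 - i = (n - i) + 1 by omega, show n + 1 - (i + 1) = n - i by omega,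
        pow_succ (1-x) (n-i), pow_succ x i]
      simp only [hPdef, hQdef, Nat.cast_add, Nat.cast_one, ← hNdef, ← hIdef, ← hcdef, ← hddef, ← hedef]
      ring
    rw [hE]
    have hB : (0:ℝ) ≤ x^i * (1-x)^(n-i) := by
      have : (0:ℝ) ≤ 1 - x := by linarith
      positivity
    refine mul_nonneg hB ?_
    -- bounds on P
    have hb1 : N - 2*I + 1 ≤ (N-1)*(N+1-I) := by
      linarith [mul_nonneg (by linarith : (0:ℝ) ≤ N-1) (by linarith : (0:ℝ) ≤ N-1-I)]
    have hb1' : -((N-1)*(N+1-I)) ≤ N - 2*I + 1 := by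
      linarith [mul_nonneg (by linarith : (0:ℝ) ≤ N-1) (by linarith : (0:ℝ) ≤ N-1-I)]
    have hb2 : N - 2*I - 1 ≤ (N-1)*(I+1) := by
      linarith [mul_nonneg (by linarith : (0:ℝ) ≤ N-1) (by linarith : (0:ℝ) ≤ I-1)]
    have hb2' : -((N-1)*(I+1)) ≤ N - 2*I - 1 := by
      linarith [mul_nonneg (by linarith : (0:ℝ) ≤ N-1) (by linarith : (0:ℝ) ≤ I-1)]
    have hPle : P ≤ c := by
      rw [hPdef, div_mul_eq_mul_div, div_le_iff₀ hden]
      linarith [mul_le_mul_of_nonneg_right hb1 hd,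
        mul_le_mul_of_nonneg_left hc1.le (by linarith : (0:ℝ) ≤ N - 1),
        mul_le_mul_of_nonneg_left hc1.ge (by linarith : (0:ℝ) ≤ N - 1),
        mul_le_mul_of_nonneg_left hc1.le (by linarith : (0:ℝ) ≤ N - 1)]
    have hPge : -c ≤ P := by
      rw [hPdef, div_mul_eq_mul_div, le_div_iff₀ hden]
      linarith [mul_le_mul_of_nonneg_right hb1' hd,
        mul_le_mul_of_nonneg_left hc1.ge (by linarith : (0:ℝ) ≤ N - 1),
        mul_le_mul_of_nonneg_left hc1.le (by linarith : (0:ℝ) ≤ N - 1)]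
    have hQle : Q ≤ c := by
      rw [hQdef, div_mul_eq_mul_div, div_le_iff₀ hden]
      linarith [mul_le_mul_of_nonneg_right hb2 he,
        mul_le_mul_of_nonneg_left hc2.le (by linarith : (0:ℝ) ≤ N - 1),
        mul_le_mul_of_nonneg_left hc2.ge (by linarith : (0:ℝ) ≤ N - 1),
        mul_le_mul_of_nonneg_left hc2.le (by linarith : (0:ℝ) ≤ N - 1)]
    have hQge : -c ≤ Q := by
      rw [hQdef, div_mul_eq_mul_div, le_div_iff₀ hden]
      linarith [mul_le_mul_of_nonneg_right hb2' he,
        mul_le_mul_of_nonneg_left hc2.ge (by linarith : (0:ℝ) ≤ N - 1),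
        mul_le_mul_of_nonneg_left hc2.le (by linarith : (0:ℝ) ≤ N - 1)]
    have h1 : -c ≤ lam * P := by
      linarith [mul_nonneg (by linarith : (0:ℝ) ≤ 1 + lam) (by linarith : (0:ℝ) ≤ c + P),
        mul_nonneg (by linarith : (0:ℝ) ≤ 1 - lam) (by linarith : (0:ℝ) ≤ c - P)]
    have h2 : lam * Q ≤ c := by
      linarith [mul_nonneg (by linarith : (0:ℝ) ≤ 1 + lam) (by linarith : (0:ℝ) ≤ c - Q),
        mul_nonneg (by linarith : (0:ℝ) ≤ 1 - lam) (by linarith : (0:ℝ) ≤ c + Q)]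
    nlinarith [mul_nonneg (by linarith : (0:ℝ) ≤ c + lam * P) (by linarith : (0:ℝ) ≤ 1 - x),
      mul_nonneg (by linarith : (0:ℝ) ≤ c - lam * Q) hx0]

lemma bez_sum {n : ℕ} (hn : 2 ≤ n) (lam x : ℝ) :
    ∑ i ∈ Finset.range (n+1), bez n lam x i = 1 := by
  have hN2 : (2:ℝ) ≤ (n:ℝ) := by exact_mod_cast hn
  have hd1 : ((n:ℝ) + 1) ≠ 0 := by positivity
  have hd2 : ((n:ℝ)^2 - 1) ≠ 0 := by nlinarith
  set g : ℕ → ℝ := fun i =>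
    if i = 0 ∨ n < i then 0 else ((n:ℝ) - 2*(i:ℝ) + 1)/((n:ℝ)^2 - 1) * bern (n+1) i x with hg
  have key : ∀ i ∈ Finset.range (n+1), bez n lam x i = bern n i x + lam * (g i - g (i+1)) := by
    intro i hi
    rw [Finset.mem_range] at hi
    have hi' : i ≤ n := by omega
    by_cases h0 : i = 0
    · subst h0
      have e1 : g 0 = 0 := by simp [hg]
      have e2 : g 1 = ((n:ℝ) - 1)/((n:ℝ)^2 - 1) * bern (n+1) 1 x := by
        simp only [hg]
        rw [if_neg (by omega : ¬ (1 = 0 ∨ n < 1))]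
        push_cast
        ring_nf
      rw [e1, e2]
      unfold bez
      rw [if_pos rfl]
      have : ((n:ℝ) - 1)/((n:ℝ)^2 - 1) = 1/((n:ℝ)+1) := by
        rw [div_eq_div_iff hd2 hd1]; ring
      rw [this]
      ring
    by_cases hnn : i = n
    · have e1 : g i = ((n:ℝ) - 2*(i:ℝ) + 1)/((n:ℝ)^2 - 1) * bern (n+1) i x := by
        simp only [hg]
        rw [if_neg (by omega : ¬ (i = 0 ∨ n < i))]
      have e2 : g (i+1) = 0 := by
        simp only [hg]
        rw [if_pos (by omega : i + 1 = 0 ∨ n < i + 1)]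
      rw [e1, e2]
      unfold bez
      rw [if_neg h0, if_pos hnn, hnn]
      have hco : ((n:ℝ) - 2*(n:ℝ) + 1)/((n:ℝ)^2 - 1) = -(1/((n:ℝ)+1)) := by
        rw [div_eq_iff hd2]; field_simp; ring
      rw [hco]
      ring
    · have e1 : g i = ((n:ℝ) - 2*(i:ℝ) + 1)/((n:ℝ)^2 - 1) * bern (n+1) i x := by
        simp only [hg]; rw [if_neg (by omega : ¬ (i = 0 ∨ n < i))]
      have e2 : g (i+1) = ((n:ℝ) - 2*(i:ℝ) - 1)/((n:ℝ)^2 - 1) * bern (n+1) (i+1) x := by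
        simp only [hg]; rw [if_neg (by omega : ¬ (i + 1 = 0 ∨ n < i + 1))]
        push_cast
        ring_nf
      rw [e1, e2]
      unfold bez
      rw [if_neg h0, if_neg hnn]
  rw [Finset.sum_congr rfl key, Finset.sum_add_distrib, bern_sum, ← Finset.mul_sum,
    Finset.sum_range_sub' g, show g 0 = 0 by simp [hg], show g (n+1) = 0 by
      simp only [hg]; rw [if_pos (by omega : n + 1 = 0 ∨ n < n + 1)]]
  ring

/-- local direct estimate for functions in the Lipschitz-type class
`Lip_M^{(k₁,k₂)}(η)`, with `α_n(x) = B_{n,λ}((t-x)²;x)`. -/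
theorem lB_lipschitz_estimate (k₁ k₂ η M : ℝ) (hk₁ : 0 ≤ k₁) (hk₂ : 0 < k₂)
    (hη : η ∈ Set.Ioc (0 : ℝ) 1) (hM : 0 < M) (f : ℝ → ℝ)
    (hf : ContinuousOn f (Set.Icc 0 1))
    (hlip : ∀ x ∈ Set.Ioc (0 : ℝ) 1, ∀ t ∈ Set.Icc (0 : ℝ) 1,
      |f t - f x| ≤ M * |t - x| ^ η / (k₁ * x ^ 2 + k₂ * x + t) ^ (η / 2))
    (lam : ℝ) (hlam : lam ∈ Set.Icc (-1 : ℝ) 1) (n : ℕ) (hn : 2 ≤ n)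
    (x : ℝ) (hx : x ∈ Set.Ioc (0 : ℝ) 1) :
    |lB n lam f x - f x| ≤
      M * (lB n lam (fun t => (t - x) ^ 2) x) ^ (η / 2) * (k₁ * x ^ 2 + k₂ * x) ^ (-(η / 2)) := by
  obtain ⟨hx0, hx1⟩ := hx
  obtain ⟨hη0, hη1⟩ := hη
  obtain ⟨hlam1, hlam2⟩ := hlam
  have hnR : (0:ℝ) < (n:ℝ) := by
    have : (2:ℝ) ≤ (n:ℝ) := by exact_mod_cast hn
    linarith
  set K : ℝ := k₁ * x ^ 2 + k₂ * x with hKdef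
  have hK : 0 < K := by nlinarith
  have hKe : 0 < K ^ (η/2) := Real.rpow_pos_of_pos hK _
  have hw : ∀ i ∈ Finset.range (n+1), 0 ≤ bez n lam x i := by
    intro i hi
    rw [Finset.mem_range] at hi
    exact bez_nonneg hn hlam1 hlam2 hx0.le hx1 (by omega)
  have hsum : ∑ i ∈ Finset.range (n+1), bez n lam x i = 1 := bez_sum hn lam x
  have ht : ∀ i ∈ Finset.range (n+1), ((i:ℝ)/(n:ℝ)) ∈ Set.Icc (0:ℝ) 1 := by
    intro i hi
    rw [Finset.mem_range] at hi
    constructor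
    · positivity
    · rw [div_le_one hnR]
      exact_mod_cast Nat.lt_succ_iff.mp hi
  -- Step 1 : rewrite the difference
  have step1 : lB n lam f x - f x
      = ∑ i ∈ Finset.range (n+1), (f ((i:ℝ)/(n:ℝ)) - f x) * bez n lam x i := by
    have : ∑ i ∈ Finset.range (n+1), (f ((i:ℝ)/(n:ℝ)) - f x) * bez n lam x i
        = ∑ i ∈ Finset.range (n+1), f ((i:ℝ)/(n:ℝ)) * bez n lam x i
          - ∑ i ∈ Finset.range (n+1), f x * bez n lam x i := by
      rw [← Finset.sum_sub_distrib]
      exact Finset.sum_congr rfl fun i _ => by ring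
    rw [this, ← Finset.mul_sum, hsum, mul_one]
    rfl
  -- Step 2 : triangle inequality
  have step2 : |lB n lam f x - f x|
      ≤ ∑ i ∈ Finset.range (n+1), |f ((i:ℝ)/(n:ℝ)) - f x| * bez n lam x i := by
    rw [step1]
    refine (Finset.abs_sum_le_sum_abs _ _).trans ?_
    refine Finset.sum_le_sum fun i hi => ?_
    rw [abs_mul, abs_of_nonneg (hw i hi)]
  -- Step 3 : per-term bound
  have step3 : ∀ i ∈ Finset.range (n+1),
      |f ((i:ℝ)/(n:ℝ)) - f x| * bez n lam x i
        ≤ M / K ^ (η/2) * (bez n lam x i * (((i:ℝ)/(n:ℝ) - x) ^ 2) ^ (η/2)) := by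
    intro i hi
    set t : ℝ := (i:ℝ)/(n:ℝ) with htdef
    have ht0 : 0 ≤ t := (ht i hi).1
    have h1 := hlip x ⟨hx0, hx1⟩ t (ht i hi)
    have h2 : M * |t - x| ^ η / (K + t) ^ (η / 2) ≤ M * |t - x| ^ η / K ^ (η/2) := by
      apply div_le_div_of_nonneg_left (by positivity) hKe
      exact Real.rpow_le_rpow hK.le (by linarith) (by linarith)
    have h3 : |t - x| ^ η = ((t - x) ^ 2) ^ (η/2) := by
      rw [← sq_abs, ← Real.rpow_natCast |t - x| 2, ← Real.rpow_mul (abs_nonneg _)]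
      norm_num
      congr 1
      ring
    have h4 : |f t - f x| ≤ M * ((t - x) ^ 2) ^ (η/2) / K ^ (η/2) := by
      rw [← h3]
      exact le_trans (by rw [hKdef]; exact h1) h2
    calc |f t - f x| * bez n lam x i ≤ (M * ((t - x) ^ 2) ^ (η/2) / K ^ (η/2)) * bez n lam x i :=
          mul_le_mul_of_nonneg_right h4 (hw i hi)
      _ = M / K ^ (η/2) * (bez n lam x i * ((t - x) ^ 2) ^ (η/2)) := by ring
  -- Step 4 : Jensen
  have jensen : ∑ i ∈ Finset.range (n+1), bez n lam x i * (((i:ℝ)/(n:ℝ) - x) ^ 2) ^ (η/2)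
      ≤ (∑ i ∈ Finset.range (n+1), bez n lam x i * ((i:ℝ)/(n:ℝ) - x) ^ 2) ^ (η/2) := by
    have := (Real.concaveOn_rpow (by linarith : (0:ℝ) ≤ η/2)
        (by linarith : η/2 ≤ 1)).le_map_sum hw hsum
        (fun i _ => Set.mem_Ici.2 (sq_nonneg ((i:ℝ)/(n:ℝ) - x)))
    simpa only [smul_eq_mul] using this
  have halpha : lB n lam (fun t => (t - x) ^ 2) x
      = ∑ i ∈ Finset.range (n+1), bez n lam x i * ((i:ℝ)/(n:ℝ) - x) ^ 2 := by
    unfold lB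
    exact Finset.sum_congr rfl fun i _ => by ring
  have halpha0 : 0 ≤ ∑ i ∈ Finset.range (n+1), bez n lam x i * ((i:ℝ)/(n:ℝ) - x) ^ 2 :=
    Finset.sum_nonneg fun i hi => mul_nonneg (hw i hi) (sq_nonneg _)
  -- combine
  calc |lB n lam f x - f x|
      ≤ ∑ i ∈ Finset.range (n+1), |f ((i:ℝ)/(n:ℝ)) - f x| * bez n lam x i := step2
    _ ≤ ∑ i ∈ Finset.range (n+1),
          M / K ^ (η/2) * (bez n lam x i * (((i:ℝ)/(n:ℝ) - x) ^ 2) ^ (η/2)) :=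
        Finset.sum_le_sum step3
    _ = M / K ^ (η/2) * ∑ i ∈ Finset.range (n+1),
          bez n lam x i * (((i:ℝ)/(n:ℝ) - x) ^ 2) ^ (η/2) := by rw [Finset.mul_sum]
    _ ≤ M / K ^ (η/2) *
          (∑ i ∈ Finset.range (n+1), bez n lam x i * ((i:ℝ)/(n:ℝ) - x) ^ 2) ^ (η/2) :=
        mul_le_mul_of_nonneg_left jensen (by positivity)
    _ = M * (lB n lam (fun t => (t - x) ^ 2) x) ^ (η / 2) * K ^ (-(η / 2)) := by
        rw [halpha, Real.rpow_neg hK.le]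
        ring
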